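/- Let γ ≥ 1 and α > 0 be reals. Suppose p : [0,∞) → [0,∞) is differentiable and nondecreasing with p(y) ≥ y^γ for all y ≥ 0, and p satisfies the differential equation p(y) − y^γ = (1/α)·p(y)^{1/γ}·p′(y) for all y ≥ 0. Then α ≥ (γ+1)^{(γ+1)/γ}. -/

import Mathlib

open Real

lemma amgm (γ t : ℝ) (hγ : 1 ≤ γ) (ht : 0 < t) :
    (γ + 1) * t ^ γ ≤ γ * t ^ (γ + 1) + 1 := by
  have hγ0 : 0 < γ := by linarith
  have h1 : (0:ℝ) < γ + 1 := by linarith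
  have hthis := Real.geom_mean_le_arith_mean2_weighted
    (w₁ := γ/(γ+1)) (w₂ := 1/(γ+1)) (p₁ := t ^ (γ+1)) (p₂ := 1)
    (by positivity) (by positivity) (by positivity) zero_le_one (by field_simp)
  rw [Real.one_rpow, mul_one, mul_one, ← Real.rpow_mul ht.le] at hthis
  have he : (γ + 1) * (γ / (γ + 1)) = γ := by field_simp
  rw [he] at hthis
  calc (γ+1) * t ^ γ ≤ (γ+1) * (γ/(γ+1) * t ^ (γ+1) + 1/(γ+1)) :=
        mul_le_mul_of_nonneg_left hthis h1.le
    _ = γ * t ^ (γ+1) + 1 := by field_simp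

lemma key (γ : ℝ) (hγ : 1 ≤ γ) {y q : ℝ} (hy : 0 < y) (hq : 0 < q) :
    (γ+1) ^ ((γ+1)/γ) * (y * (q ^ γ - y ^ γ)) ≤ γ * (q ^ γ * q) := by
  have hγ0 : 0 < γ := by linarith
  have h1 : (0:ℝ) < γ + 1 := by linarith
  set lam := (γ+1) ^ (1/γ) with hlam
  have hlam0 : 0 < lam := rpow_pos_of_pos h1 _
  have hlamγ : lam ^ γ = γ + 1 := by
    rw [hlam, ← rpow_mul h1.le, one_div, inv_mul_cancel₀ hγ0.ne', rpow_one]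
  have hA : lam ^ (γ+1) = (γ+1) ^ ((γ+1)/γ) := by
    rw [hlam, ← rpow_mul h1.le]
    congr 1
    field_simp
  set t := q / (lam * y) with ht
  have ht0 : 0 < t := by positivity
  have hmain := amgm γ t hγ ht0
  have htγ : t ^ γ = q ^ γ / ((γ+1) * y ^ γ) := by
    rw [ht, div_rpow hq.le (by positivity), mul_rpow hlam0.le hy.le, hlamγ]
  have htγ1 : t ^ (γ+1) = q ^ γ * q / ((γ+1) ^ ((γ+1)/γ) * (y ^ γ * y)) := by
    rw [ht, div_rpow hq.le (by positivity), mul_rpow hlam0.le hy.le, hA,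
      rpow_add hq γ 1, rpow_one, rpow_add hy γ 1, rpow_one]
  rw [htγ, htγ1] at hmain
  set A := (γ+1) ^ ((γ+1)/γ) with hAdef
  have hA0 : 0 < A := rpow_pos_of_pos h1 _
  have hyγ : 0 < y ^ γ := rpow_pos_of_pos hy _
  have hqγ : 0 < q ^ γ := rpow_pos_of_pos hq _
  field_simp at hmain
  nlinarith [hmain, mul_pos h1 hyγ, mul_pos hyγ hy, hA0]

theorem stmt4 (γ α : ℝ) (hγ : 1 ≤ γ) (hα : 0 < α) (p : ℝ → ℝ)
    (hdiff : ∀ y ≥ (0:ℝ), DifferentiableAt ℝ p y)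
    (hmono : MonotoneOn p (Set.Ici 0))
    (hnn : ∀ y ≥ (0:ℝ), 0 ≤ p y)
    (hge : ∀ y ≥ (0:ℝ), y ^ γ ≤ p y)
    (hode : ∀ y ≥ (0:ℝ), p y - y ^ γ = (1/α) * (p y) ^ (1/γ) * deriv p y) :
    (γ+1) ^ ((γ+1)/γ) ≤ α := by
  by_contra hcon
  push_neg at hcon
  have hγ0 : 0 < γ := by linarith
  have h1 : (0:ℝ) < γ + 1 := by linarith
  set A := (γ+1) ^ ((γ+1)/γ) with hAdef
  have hA0 : 0 < A := rpow_pos_of_pos h1 _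
  set c := γ * (α / A) with hc
  have hc0 : 0 < c := by positivity
  have hcγ : c < γ := by
    rw [hc]
    have : α / A < 1 := (div_lt_one hA0).mpr hcon
    nlinarith
  set F := fun y => Real.log (p y) - c * Real.log y with hF
  have hpos : ∀ y > (0:ℝ), 0 < p y := fun y hy =>
    lt_of_lt_of_le (rpow_pos_of_pos hy γ) (hge y hy.le)
  have hFderiv : ∀ y > (0:ℝ),
      HasDerivAt F (deriv p y / p y - c * y⁻¹) y := by
    intro y hy
    exact (((hdiff y hy.le).hasDerivAt).log (hpos y hy).ne').sub
      ((Real.hasDerivAt_log hy.ne').const_mul c)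
  have hFanti : AntitoneOn F (Set.Ici 1) := by
    apply antitoneOn_of_deriv_nonpos (convex_Ici 1)
    · intro y hy
      have hy0 : (0:ℝ) < y := lt_of_lt_of_le one_pos hy
      exact ((hFderiv y hy0).differentiableAt).continuousAt.continuousWithinAt
    · intro y hy
      rw [interior_Ici] at hy
      exact ((hFderiv y (lt_trans one_pos hy)).differentiableAt).differentiableWithinAt
    · intro y hy
      rw [interior_Ici] at hy
      have hy0 : (0:ℝ) < y := lt_trans one_pos hy
      rw [(hFderiv y hy0).deriv]
      set q := (p y) ^ (1/γ) with hqdef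
      have hp0 : 0 < p y := hpos y hy0
      have hq0 : 0 < q := rpow_pos_of_pos hp0 _
      have hqγ : q ^ γ = p y := by
        rw [hqdef, ← rpow_mul hp0.le, one_div, inv_mul_cancel₀ hγ0.ne', rpow_one]
      have hk := key γ hγ hy0 hq0
      rw [hqγ] at hk
      have hp' : deriv p y = α * (p y - y ^ γ) / q := by
        rw [hode y hy0.le]
        field_simp
        rw [hqdef]
      rw [hp', sub_nonpos, div_div, div_le_iff₀ (by positivity)]
      have e : c * y⁻¹ * (q * p y) = (α * (γ * (p y * q))) / (A * y) := by
        rw [hc]; field_simp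
      rw [e, le_div_iff₀ (by positivity)]
      calc α * (p y - y ^ γ) * (A * y)
          = α * (A * (y * (p y - y ^ γ))) := by ring
        _ ≤ α * (γ * (p y * q)) := mul_le_mul_of_nonneg_left hk hα.le
  have hp1 : (1:ℝ) ≤ p 1 := by
    have := hge 1 zero_le_one
    rwa [Real.one_rpow] at this
  set C := Real.log (p 1) with hC
  have hC0 : 0 ≤ C := Real.log_nonneg hp1
  set y := Real.exp ((C + 1)/(γ - c)) with hy
  have hy1 : (1:ℝ) ≤ y := by
    rw [hy]
    exact Real.one_le_exp (div_nonneg (by linarith) (by linarith))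
  have hy0 : (0:ℝ) < y := lt_of_lt_of_le one_pos hy1
  have hFy : F y ≤ F 1 := hFanti Set.self_mem_Ici hy1 hy1
  have hF1 : F 1 = C := by simp [hF, hC]
  have hlog : γ * Real.log y ≤ Real.log (p y) := by
    have h2 : Real.log (y ^ γ) ≤ Real.log (p y) :=
      Real.log_le_log (rpow_pos_of_pos hy0 γ) (hge y hy0.le)
    rwa [Real.log_rpow hy0] at h2
  have hlogy : Real.log y = (C + 1)/(γ - c) := by rw [hy, Real.log_exp]
  have : (γ - c) * Real.log y ≤ C := by
    have : F y = Real.log (p y) - c * Real.log y := rfl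
    rw [hF1] at hFy
    simp only [hF] at hFy
    nlinarith [hlog, hFy]
  rw [hlogy] at this
  rw [div_eq_mul_inv, ← mul_assoc, mul_comm (γ - c), mul_assoc,
    mul_inv_cancel₀ (by linarith : γ - c ≠ 0), mul_one] at this
  linarith
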